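/- Let m be a positive integer with gcd(3, m) = 1, and U the subgroup of order 2^m + 1 of F_{2^{2m}}^×. Then the map x ↦ (x^3 + x^2 + 1)/(x^3 + x + 1) is a well-defined bijection of U. -/

import Mathlib

theorem stmt_7 (m : ℕ) (hm : 0 < m) (h3 : Nat.gcd 3 m = 1)
    (F : Type*) [Field F] [Fintype F] (hF : Fintype.card F = 2 ^ (2 * m)) :
    (∀ x : F, x ^ (2 ^ m + 1) = 1 → x ^ 3 + x + 1 ≠ 0) ∧
      Set.BijOn (fun x : F => (x ^ 3 + x ^ 2 + 1) / (x ^ 3 + x + 1))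
        {x : F | x ^ (2 ^ m + 1) = 1} {x : F | x ^ (2 ^ m + 1) = 1} := by
  classical
  -- characteristic 2
  haveI hC : CharP F 2 := by
    obtain ⟨n, hn, hcard⟩ := FiniteField.card F (ringChar F)
    have hdvd : ringChar F ∣ 2 ^ (2 * m) := by
      rw [← hF, hcard]
      exact dvd_pow_self _ (by positivity)
    have h2 : ringChar F = 2 :=
      (Nat.prime_dvd_prime_iff_eq hn Nat.prime_two).mp (hn.dvd_of_dvd_pow hdvd)
    exact h2 ▸ ringChar.charP F
  haveI : Fact (Nat.Prime 2) := ⟨Nat.prime_two⟩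
  have h2 : (2 : F) = 0 := by
    simpa using (CharP.cast_eq_zero F 2)
  have hN0 : (2 : ℕ) ^ m ≠ 0 := by positivity
  -- order-7 elements cannot exist
  have h7 : ∀ a : F, a ^ 7 = 1 → a = 1 := by
    intro a ha
    by_contra hne
    have ha0 : a ≠ 0 := by
      rintro rfl; simp at ha
    have hu7 : (Units.mk0 a ha0) ^ 7 = 1 := by
      ext; simpa using ha
    have hdvd : orderOf (Units.mk0 a ha0) ∣ 7 := orderOf_dvd_of_pow_eq_one hu7
    have hne1 : orderOf (Units.mk0 a ha0) ≠ 1 := by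
      intro h
      have h1 := orderOf_eq_one_iff.mp h
      exact hne (by simpa using congrArg Units.val h1)
    have h7p : Nat.Prime 7 := by norm_num
    have ho7 : orderOf (Units.mk0 a ha0) = 7 :=
      (h7p.eq_one_or_self_of_dvd _ hdvd).resolve_left hne1
    have hcd : (7 : ℕ) ∣ Fintype.card Fˣ := ho7 ▸ orderOf_dvd_card
    rw [Fintype.card_units, hF] at hcd
    -- 7 ∣ 2^(2m) - 1 forces 3 ∣ 2m forces 3 ∣ m
    have hpow : (2 : ℕ) ^ (2 * m) % 7 = 1 := by
      have h1 : (1 : ℕ) ≤ 2 ^ (2 * m) := Nat.one_le_two_pow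
      omega
    have hmod : (2 : ℕ) ^ (2 * m) % 7 = 2 ^ (2 * m % 3) % 7 := by
      conv_lhs => rw [← Nat.div_add_mod (2 * m) 3]
      rw [pow_add, pow_mul, Nat.mul_mod, Nat.pow_mod]
      norm_num
    rw [hmod] at hpow
    have hr : 2 * m % 3 = 0 ∨ 2 * m % 3 = 1 ∨ 2 * m % 3 = 2 := by omega
    have h3d : 2 * m % 3 = 0 := by
      rcases hr with h | h | h <;> rw [h] at hpow <;> simp_all
    have h3m : (3 : ℕ) ∣ m := by
      have : (3 : ℕ) ∣ 2 * m := Nat.dvd_of_mod_eq_zero h3d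
      omega
    have := Nat.gcd_eq_left h3m
    omega
  -- no roots of x^3+x+1 and x^3+x^2+1
  have hg0 : ∀ a : F, a ^ 3 + a + 1 ≠ 0 := by
    intro a ha
    have h7a : a ^ 7 = 1 := by
      linear_combination (1 + a + a ^ 2 + 2 * a ^ 3 + a ^ 4) * ha -
        (1 + a + a ^ 2 + 2 * a ^ 3 + 2 * a ^ 4 + a ^ 5 + a ^ 6) * h2
    have ha1 : a = 1 := h7 a h7a
    rw [ha1] at ha
    exact one_ne_zero (by linear_combination ha - h2)
  have hh0 : ∀ a : F, a ^ 3 + a ^ 2 + 1 ≠ 0 := by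
    intro a ha
    have h7a : a ^ 7 = 1 := by
      linear_combination (1 + 2 * a + a ^ 2 + a ^ 3 + a ^ 4) * ha -
        (1 + a + a ^ 2 + 2 * a ^ 3 + 2 * a ^ 4 + a ^ 5 + a ^ 6) * h2
    have ha1 : a = 1 := h7 a h7a
    rw [ha1] at ha
    exact one_ne_zero (by linear_combination ha - h2)
  -- Frobenius facts
  have frob : ∀ a b : F, (a + b) ^ 2 ^ m = a ^ 2 ^ m + b ^ 2 ^ m := fun a b =>
    add_pow_char_pow a b 2 m
  have hU0 : ∀ x : F, x ^ (2 ^ m + 1) = 1 → x ≠ 0 := by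
    rintro x hx rfl
    rw [zero_pow (by positivity)] at hx
    exact zero_ne_one hx
  have hUinv : ∀ x : F, x ^ (2 ^ m + 1) = 1 → x ^ 2 ^ m = x⁻¹ := by
    intro x hx
    exact eq_inv_of_mul_eq_one_left (by rw [← pow_succ]; exact hx)
  -- MapsTo
  have hmap : Set.MapsTo (fun x : F => (x ^ 3 + x ^ 2 + 1) / (x ^ 3 + x + 1))
      {x : F | x ^ (2 ^ m + 1) = 1} {x : F | x ^ (2 ^ m + 1) = 1} := by
    intro x hx
    simp only [Set.mem_setOf_eq] at hx ⊢
    have hx0 := hU0 x hx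
    have hxi := hUinv x hx
    have hgN : (x ^ 3 + x + 1) ^ 2 ^ m = (x⁻¹) ^ 3 + x⁻¹ + 1 := by
      rw [frob, frob, one_pow, pow_right_comm x 3, hxi]
    have hhN : (x ^ 3 + x ^ 2 + 1) ^ 2 ^ m = (x⁻¹) ^ 3 + (x⁻¹) ^ 2 + 1 := by
      rw [frob, frob, one_pow, pow_right_comm x 3, pow_right_comm x 2, hxi]
    have hgi : (x⁻¹) ^ 3 + x⁻¹ + 1 ≠ 0 := by
      have hv : (x⁻¹) ^ 3 + x⁻¹ + 1 = (x ^ 3 + x ^ 2 + 1) / x ^ 3 := by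
        field_simp <;> ring
      rw [hv]
      exact div_ne_zero (hh0 x) (pow_ne_zero _ hx0)
    rw [pow_succ, div_pow, hgN, hhN]
    rw [div_mul_div_comm, div_eq_one_iff_eq (mul_ne_zero hgi (hg0 x))]
    field_simp
    ring
  -- InjOn
  have hinj : Set.InjOn (fun x : F => (x ^ 3 + x ^ 2 + 1) / (x ^ 3 + x + 1))
      {x : F | x ^ (2 ^ m + 1) = 1} := by
    intro x hx y hy hfxy
    simp only [Set.mem_setOf_eq] at hx hy
    by_contra hne
    have hx0 := hU0 x hx
    have hy0 := hU0 y hy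
    have hxi := hUinv x hx
    have hyi := hUinv y hy
    have hs0 : x + y ≠ 0 := by
      intro h
      exact hne (by linear_combination h - y * h2)
    have hsub0 : x - y ≠ 0 := sub_ne_zero.mpr hne
    simp only at hfxy
    rw [div_eq_div_iff (hg0 x) (hg0 y)] at hfxy
    -- cross-multiplied equation gives Q = 0
    have hQ : x ^ 2 * y ^ 2 + x ^ 2 * y + x * y ^ 2 + x * y + x + y + 1 = 0 := by
      have hsQ : (x + y) * (x ^ 2 * y ^ 2 + x ^ 2 * y + x * y ^ 2 + x * y + x + y + 1) = 0 := by
        linear_combination hfxy +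
          (y ^ 2 + x + x * y + x * y ^ 2 + x * y ^ 3 + x ^ 2 * y ^ 2 + x ^ 3 * y ^ 2) * h2
      exact (mul_eq_zero.mp hsQ).resolve_left hs0
    have hp0 : x * y ≠ 0 := mul_ne_zero hx0 hy0
    have hp1 : x * y ≠ 1 := by
      intro h
      exact one_ne_zero (show (1 : F) = 0 by
        linear_combination hQ - (x * y + x + y + 2) * h - (x + y + 1) * h2)
    have hD0 : (x * y) ^ 2 + x * y + 1 ≠ 0 := by
      intro hD
      have hpe : (x + y) * (x * y + 1) = 0 := by linear_combination hQ - hD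
      rcases mul_eq_zero.mp hpe with h | h
      · exact hs0 h
      · exact hp1 (by linear_combination h - h2)
    -- key idempotent
    have hsD : (x + y) * ((x * y) ^ 2 + x * y + 1) ≠ 0 := mul_ne_zero hs0 hD0
    have he2 : (x * ((x * y) ^ 2 + x * y + 1) + (x * y) * (x + y)) ^ 2 =
        (x * ((x * y) ^ 2 + x * y + 1) + (x * y) * (x + y)) *
          ((x + y) * ((x * y) ^ 2 + x * y + 1)) := by
      linear_combination
        (x * y + x * y ^ 2 + x ^ 2 * y + x ^ 2 * y ^ 2 + x ^ 2 * y ^ 3 + x ^ 3 * y ^ 2 +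
          x ^ 3 * y ^ 3) * hQ -
        (x * y + x * y ^ 2 + x * y ^ 3 + x ^ 2 * y + 3 * x ^ 2 * y ^ 2 + 2 * x ^ 2 * y ^ 3 +
          x ^ 2 * y ^ 4 + 2 * x ^ 3 * y ^ 2 + 4 * x ^ 3 * y ^ 3 + 2 * x ^ 3 * y ^ 4 +
          x ^ 3 * y ^ 5 + 2 * x ^ 4 * y ^ 3 + 3 * x ^ 4 * y ^ 4 + x ^ 4 * y ^ 5 +
          x ^ 5 * y ^ 4 + x ^ 5 * y ^ 5) * h2
    have hee : (x / (x + y) + x * y / ((x * y) ^ 2 + x * y + 1)) ^ 2 =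
        x / (x + y) + x * y / ((x * y) ^ 2 + x * y + 1) := by
      have h1 : x / (x + y) + x * y / ((x * y) ^ 2 + x * y + 1) =
          (x * ((x * y) ^ 2 + x * y + 1) + (x * y) * (x + y)) /
          ((x + y) * ((x * y) ^ 2 + x * y + 1)) := by
        rw [div_add_div _ _ hs0 hD0]; ring
      rw [h1, div_pow, div_eq_div_iff (pow_ne_zero _ hsD) hsD]
      linear_combination ((x + y) * ((x * y) ^ 2 + x * y + 1)) * he2
    have heN : (x / (x + y) + x * y / ((x * y) ^ 2 + x * y + 1)) ^ 2 ^ m =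
        x / (x + y) + x * y / ((x * y) ^ 2 + x * y + 1) := by
      rcases mul_eq_zero.mp (show (x / (x + y) + x * y / ((x * y) ^ 2 + x * y + 1)) *
          ((x / (x + y) + x * y / ((x * y) ^ 2 + x * y + 1)) - 1) = 0 by
            linear_combination hee) with h | h
      · rw [h, zero_pow hN0]
      · rw [sub_eq_zero.mp h, one_pow]
    -- v = xy/D is Frobenius-fixed
    have hpU : (x * y) ^ (2 ^ m + 1) = 1 := by
      rw [mul_pow, hx, hy, one_mul]
    have hpi : (x * y) ^ 2 ^ m = (x * y)⁻¹ := hUinv _ hpU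
    have hDq : ((x * y)⁻¹) ^ 2 + (x * y)⁻¹ + 1 ≠ 0 := by
      have hv : ((x * y)⁻¹) ^ 2 + (x * y)⁻¹ + 1 =
          ((x * y) ^ 2 + x * y + 1) / (x * y) ^ 2 := by
        field_simp <;> ring
      rw [hv]
      exact div_ne_zero hD0 (pow_ne_zero _ hp0)
    have hvN : (x * y / ((x * y) ^ 2 + x * y + 1)) ^ 2 ^ m =
        x * y / ((x * y) ^ 2 + x * y + 1) := by
      rw [div_pow, frob, frob, one_pow, pow_right_comm (x * y) 2, hpi]
      rw [div_eq_div_iff hDq hD0]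
      field_simp
      ring
    -- hence w = x/(x+y) is Frobenius-fixed
    have hwN : (x / (x + y)) ^ 2 ^ m = x / (x + y) := by
      have h1 : (x / (x + y)) ^ 2 ^ m + (x * y / ((x * y) ^ 2 + x * y + 1)) ^ 2 ^ m =
          x / (x + y) + x * y / ((x * y) ^ 2 + x * y + 1) := by
        rw [← frob]; exact heN
      rw [hvN] at h1
      exact add_right_cancel h1
    -- unfold: x⁻¹ / (x⁻¹ + y⁻¹) = x / (x + y) forces x = y
    have hsiN : (x + y) ^ 2 ^ m = x⁻¹ + y⁻¹ := by rw [frob, hxi, hyi]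
    have hsi0 : x⁻¹ + y⁻¹ ≠ 0 := by
      have hv : x⁻¹ + y⁻¹ = (x + y) / (x * y) := by field_simp <;> ring
      rw [hv]
      exact div_ne_zero hs0 hp0
    rw [div_pow, hxi, hsiN, div_eq_div_iff hsi0 hs0] at hwN
    have hxx : x⁻¹ * x = 1 := inv_mul_cancel₀ hx0
    have hyy : y⁻¹ * y = 1 := inv_mul_cancel₀ hy0
    have hC2 : y * (x + y) = x * y + x * x := by
      linear_combination (x * y) * hwN - y ^ 2 * hxx + x ^ 2 * hyy
    have hfin : (x - y) * (x + y) = 0 := by linear_combination -hC2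
    rcases mul_eq_zero.mp hfin with h | h
    · exact hsub0 h
    · exact hs0 h
  refine ⟨fun x _ => hg0 x, ?_⟩
  exact ((Set.toFinite _).injOn_iff_bijOn_of_mapsTo hmap).mp hinj
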